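/- Let q = 2ⁿ for some positive integer n and let a₁, a₂, b₀ ∈ F_q. The rational function (x³ + a₂x² + a₁x)/(x² + x + b₀) ∈ F_q(x) is a permutation rational function of P¹(F_q) if and only if Tr_{F_q/F_2}(b₀) = 1, a₁ = b₀ + b₀⁻¹, and a₂ = 1 + b₀⁻¹. -/

import Mathlib

open Polynomial

noncomputable section

open scoped Classical in
/-- The self-map of `ℙ¹(F) = F ∪ {∞}` (encoded as `Option F`, with `none` = `∞`)
induced by the rational function `f/g`, where `f, g` are coprime polynomials. -/
def ratEval {F : Type} [Field F] (f g : F[X]) : Option F → Option F := fun x =>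
  match x with
  | some a => if g.eval a ≠ 0 then some (f.eval a / g.eval a) else none
  | none =>
      if g.natDegree < f.natDegree then none
      else if f.natDegree < g.natDegree then some 0
      else some (f.leadingCoeff / g.leadingCoeff)

/-- `trOne n x` says the absolute trace `x + x² + x⁴ + ⋯ + x^{2^{n-1}}` of `x ∈ F_{2^n}` is `1`. -/
def trOne {F : Type} [Field F] (n : ℕ) (x : F) : Prop :=
  ∑ i ∈ Finset.range n, x ^ 2 ^ i = 1

namespace S13
open Finset
open scoped Classical
variable {F : Type} [Field F] [Fintype F]

lemma char_two {n : ℕ} (hq : Fintype.card F = 2 ^ n) : CharP F 2 := by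
  obtain ⟨m, hp, hc⟩ := FiniteField.card F (ringChar F)
  have hd : ringChar F ∣ 2 ^ n := by
    rw [← hq, hc]; exact dvd_pow_self _ (by positivity)
  have h2 : ringChar F = 2 :=
    (Nat.prime_dvd_prime_iff_eq hp Nat.prime_two).mp (hp.dvd_of_dvd_pow hd)
  exact h2 ▸ ringChar.charP F

/-- abbreviation for the trace sum -/
def tr (n : ℕ) (x : F) : F := ∑ i ∈ Finset.range n, x ^ 2 ^ i

def Epoly (F : Type) [Field F] (n : ℕ) : F[X] := ∑ i ∈ Finset.range n, X ^ 2 ^ i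

/-- the image of the Artin-Schreier map -/
def Hset (F : Type) [Field F] [Fintype F] : Finset F :=
  Finset.image (fun x : F => x ^ 2 + x) Finset.univ

section
variable {n : ℕ} [CharP F 2]

omit [Fintype F] in
lemma h2 : (2 : F) = 0 := by
  have := CharP.cast_eq_zero F 2; exact_mod_cast this

omit [CharP F 2] in
lemma pow_card (hq : Fintype.card F = 2 ^ n) (x : F) : x ^ 2 ^ n = x := by
  rw [← hq]; exact FiniteField.pow_card x

omit [Fintype F] in
lemma tr_add (x y : F) : tr n (x + y) = tr n x + tr n y := by
  unfold tr
  rw [← Finset.sum_add_distrib]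
  exact Finset.sum_congr rfl fun i _ => add_pow_char_pow ..

lemma tr_sq (hq : Fintype.card F = 2 ^ n) (x : F) : tr n (x ^ 2) = tr n x := by
  unfold tr
  have e : ∀ i : ℕ, (x ^ 2) ^ 2 ^ i = x ^ 2 ^ (i + 1) := by
    intro i; rw [← pow_mul, ← pow_succ']
  simp_rw [e]
  cases n with
  | zero => simp
  | succ m =>
    rw [Finset.sum_range_succ, Finset.sum_range_succ' (fun i => x ^ 2 ^ i) m,
      pow_card hq x]
    simp

lemma tr_AS (hq : Fintype.card F = 2 ^ n) (x : F) : tr n (x ^ 2 + x) = 0 := by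
  rw [tr_add, tr_sq hq, ← two_mul, h2, zero_mul]

omit [Fintype F] [CharP F 2] in
lemma tr_zero' : tr n (0 : F) = 0 := by
  unfold tr
  refine Finset.sum_eq_zero fun i _ => ?_
  exact zero_pow (by positivity)

lemma tr_sq_add_add (hq : Fintype.card F = 2 ^ n) (x b : F) :
    tr n (x ^ 2 + x + b) = tr n b := by
  rw [add_assoc, ← add_assoc, tr_add, tr_AS hq, zero_add]

/-- the trace takes values in {0,1} -/
lemma tr_zero_or_one (hq : Fintype.card F = 2 ^ n) (x : F) :
    tr n x = 0 ∨ tr n x = 1 := by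
  have hs : tr n x ^ 2 = tr n x := by
    unfold tr
    rw [sum_pow_char]
    have := tr_sq hq x
    unfold tr at this
    calc ∑ i ∈ Finset.range n, (x ^ 2 ^ i) ^ 2 = ∑ i ∈ Finset.range n, (x ^ 2) ^ 2 ^ i := by
          refine Finset.sum_congr rfl fun i _ => ?_
          rw [← pow_mul, ← pow_mul, mul_comm]
      _ = _ := this
  have : tr n x * (tr n x - 1) = 0 := by linear_combination hs
  rcases mul_eq_zero.mp this with h | h
  · exact Or.inl h
  · exact Or.inr (by linear_combination h)

omit [Fintype F] in
/-- fibers of x ↦ x^2+x -/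
lemma pair_lemma (x x₀ : F) : x ^ 2 + x = x₀ ^ 2 + x₀ ↔ x = x₀ ∨ x = x₀ + 1 := by
  have hc : (2 : F) = 0 := h2
  have key : (x - x₀) * (x - (x₀ + 1)) = (x ^ 2 + x) - (x₀ ^ 2 + x₀) := by
    linear_combination (-x * x₀ - x + x₀ ^ 2 + x₀) * hc
  constructor
  · intro h
    have : (x - x₀) * (x - (x₀ + 1)) = 0 := by rw [key, h, sub_self]
    rcases mul_eq_zero.mp this with h' | h'
    · exact Or.inl (sub_eq_zero.mp h')
    · exact Or.inr (sub_eq_zero.mp h')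
  · rintro (rfl | rfl)
    · rfl
    · ring_nf
      linear_combination (x₀ + 1) * hc

omit [Fintype F] [CharP F 2] in
lemma self_ne_add_one (x : F) [CharP F 2] : x ≠ x + 1 := by
  intro h
  have : (1 : F) = 0 := by linear_combination -h
  exact one_ne_zero this

omit [CharP F 2] in
lemma mem_Hset {h : F} : h ∈ Hset F ↔ ∃ x : F, x ^ 2 + x = h := by
  simp [Hset]

lemma filter_fiber (x₀ : F) :
    Finset.univ.filter (fun x : F => x ^ 2 + x = x₀ ^ 2 + x₀) = {x₀, x₀ + 1} := by
  ext x
  simp [pair_lemma]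

lemma card_Hset (hq : Fintype.card F = 2 ^ n) : 2 * (Hset F).card = 2 ^ n := by
  have hc := Finset.card_eq_sum_card_fiberwise
    (f := fun x : F => x ^ 2 + x) (s := Finset.univ) (t := Hset F)
    (fun x _ => Finset.mem_image_of_mem _ (Finset.mem_univ x))
  have he : ∀ b ∈ Hset F, (Finset.univ.filter (fun a : F => a ^ 2 + a = b)).card = 2 := by
    intro b hb
    obtain ⟨x₀, hx₀⟩ := mem_Hset.mp hb
    subst hx₀
    rw [filter_fiber, Finset.card_pair (self_ne_add_one x₀)]
  rw [Finset.sum_congr rfl he, Finset.sum_const, smul_eq_mul] at hc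
  rw [← hq, ← Finset.card_univ, hc, mul_comm]

/-- summing a function constant on AS-fibers paired with weight -/
lemma sum_pairing (k m : F → F) (hk : ∀ x : F, k x + k (x + 1) = m (x ^ 2 + x)) :
    ∑ x : F, k x = ∑ h ∈ Hset F, m h := by
  rw [← Finset.sum_fiberwise_of_maps_to
    (g := fun x : F => x ^ 2 + x) (t := Hset F)
    (fun x _ => Finset.mem_image_of_mem _ (Finset.mem_univ x)) k]
  refine Finset.sum_congr rfl fun b hb => ?_
  obtain ⟨x₀, rfl⟩ := mem_Hset.mp hb
  rw [filter_fiber, Finset.sum_pair (self_ne_add_one x₀)]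
  exact hk x₀

/-- sums where the pairing cancels -/
lemma sum_cancel (k : F → F) (hk : ∀ x : F, k (x + 1) = k x) :
    ∑ x : F, k x = 0 := by
  have : ∀ x : F, k x + k (x + 1) = (fun _ : F => (0:F)) (x ^ 2 + x) := fun x => by
    rw [hk x, ← two_mul, h2, zero_mul]
  rw [sum_pairing k (fun _ : F => (0:F)) this]
  simp

omit [Fintype F] in
lemma Epoly_eval (n : ℕ) (x : F) : (Epoly F n).eval x = tr n x := by
  simp [Epoly, tr, eval_finset_sum]

omit [Fintype F] [CharP F 2] in
lemma Epoly_monic_natDegree {n : ℕ} (hn : 0 < n) :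
    (Epoly F n).Monic ∧ (Epoly F n).natDegree = 2 ^ (n - 1) := by
  induction n with
  | zero => omega
  | succ m ih =>
    rcases Nat.eq_zero_or_pos m with rfl | hm
    · constructor
      · simp [Epoly, monic_X_pow]
      · simp [Epoly]
    · obtain ⟨ihm, ihd⟩ := ih hm
      have hstep : Epoly F (m + 1) = Epoly F m + X ^ 2 ^ m := by
        simp [Epoly, Finset.sum_range_succ]
      have hdeg : (Epoly F m).degree < (X ^ 2 ^ m : F[X]).degree := by
        rw [degree_X_pow, degree_eq_natDegree ihm.ne_zero, ihd]
        exact_mod_cast Nat.pow_lt_pow_right one_lt_two (by omega)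
      constructor
      · rw [hstep, add_comm]
        exact (monic_X_pow _).add_of_left hdeg
      · rw [hstep, natDegree_add_eq_right_of_natDegree_lt, natDegree_X_pow]
        · simp
        · rw [natDegree_X_pow, ihd]
          exact Nat.pow_lt_pow_right one_lt_two (by omega)

omit [Fintype F] in
lemma Epoly_derivative {n : ℕ} (hn : 0 < n) :
    derivative (Epoly F n) = 1 := by
  unfold Epoly
  rw [map_sum]
  cases n with
  | zero => omega
  | succ m =>
    rw [Finset.sum_range_succ' (fun i => derivative (X ^ 2 ^ i : F[X])) m]
    have e0 : derivative (X ^ 2 ^ 0 : F[X]) = 1 := by simp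
    have ej : ∀ j ∈ Finset.range m, derivative (X ^ 2 ^ (j + 1) : F[X]) = 0 := by
      intro j _
      rw [derivative_X_pow]
      have : ((2 ^ (j + 1) : ℕ) : F) = 0 := by
        push_cast
        rw [pow_succ]
        have h0 : ((2:ℕ) : F) = 0 := CharP.cast_eq_zero F 2
        push_cast at h0
        rw [h0, mul_zero]
      rw [this, map_zero, zero_mul]
    rw [Finset.sum_congr rfl ej, e0]
    simp

/-- E is the product of (X - h) over the AS image -/
lemma Epoly_eq_prod (hn : 0 < n) (hq : Fintype.card F = 2 ^ n) :
    Epoly F n = ∏ h ∈ Hset F, (X - C h) := by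
  obtain ⟨hmon, hdeg⟩ := Epoly_monic_natDegree (F := F) hn
  have hE0 : Epoly F n ≠ 0 := hmon.ne_zero
  -- every element of Hset is a root
  have hroot : ∀ h ∈ Hset F, IsRoot (Epoly F n) h := by
    intro h hh
    obtain ⟨x, rfl⟩ := mem_Hset.mp hh
    rw [IsRoot, Epoly_eval, tr_AS hq]
  -- multiset inclusion into roots
  have hle : (Hset F).val ≤ (Epoly F n).roots := by
    refine Multiset.le_iff_count.mpr fun a => ?_
    by_cases ha : a ∈ Hset F
    · have h1 : (Hset F).val.count a = 1 := Multiset.count_eq_one_of_mem (Hset F).nodup ha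
      rw [h1, Multiset.one_le_count_iff_mem]
      exact (mem_roots hE0).mpr (hroot a ha)
    · have h0 : (Hset F).val.count a = 0 := Multiset.count_eq_zero.mpr (by simpa using ha)
      rw [h0]; exact Nat.zero_le _
  have hdvd : (∏ h ∈ Hset F, (X - C h)) ∣ Epoly F n := by
    have h1 : ((Hset F).val.map fun a => X - C a).prod ∣
        ((Epoly F n).roots.map fun a => X - C a).prod :=
      Multiset.prod_dvd_prod_of_le (Multiset.map_le_map hle)
    exact h1.trans (prod_multiset_X_sub_C_dvd _)
  -- degrees
  have hPmon : (∏ h ∈ Hset F, (X - C h)).Monic :=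
    monic_prod_of_monic _ _ fun h _ => monic_X_sub_C h
  have hPdeg : (∏ h ∈ Hset F, (X - C h)).natDegree = (Hset F).card := by
    rw [natDegree_prod _ _ fun h _ => X_sub_C_ne_zero h]
    simp [natDegree_X_sub_C]
  have hcard : (Hset F).card = 2 ^ (n - 1) := by
    have := card_Hset (n := n) hq
    have h2n : (2:ℕ) ^ n = 2 * 2 ^ (n - 1) := by
      cases n with
      | zero => omega
      | succ m => rw [pow_succ, mul_comm]; simp
    omega
  obtain ⟨u, hu⟩ := hdvd
  have hu0 : u ≠ 0 := by
    intro h; rw [h, mul_zero] at hu; exact hE0 hu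
  have hP0 : (∏ h ∈ Hset F, (X - C h)) ≠ 0 := hPmon.ne_zero
  have hud : u.natDegree = 0 := by
    have := natDegree_mul hP0 hu0
    rw [← hu, hdeg, hPdeg, hcard] at this
    omega
  have huc : u = C (u.coeff 0) := eq_C_of_natDegree_eq_zero hud
  have hlc : u.coeff 0 = 1 := by
    have hl := congrArg leadingCoeff hu
    rw [hmon.leadingCoeff, leadingCoeff_mul, hPmon.leadingCoeff, one_mul] at hl
    rw [huc] at hl
    simpa using hl.symm
  rw [hu, huc, hlc, map_one, mul_one]

/-- Artin-Schreier: tr c = 0 iff c is in the image of x ↦ x²+x -/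
lemma tr_eq_zero_iff (hn : 0 < n) (hq : Fintype.card F = 2 ^ n) (c : F) :
    tr n c = 0 ↔ ∃ x : F, x ^ 2 + x = c := by
  rw [← mem_Hset (F := F)]
  have := congrArg (eval c) (Epoly_eq_prod hn hq)
  rw [Epoly_eval, eval_prod] at this
  simp_rw [eval_sub, eval_X, eval_C] at this
  rw [this, Finset.prod_eq_zero_iff]
  constructor
  · rintro ⟨h, hh, he⟩
    rwa [← sub_eq_zero.mp he] at hh
  · intro hc
    exact ⟨c, hc, sub_self c⟩

/-- key sum: when tr b = 1, ∑_{h ∈ H} (b - h)⁻¹ = 1 -/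
lemma sum_inv_eq_one (hn : 0 < n) (hq : Fintype.card F = 2 ^ n) {b : F}
    (hb : tr n b = 1) : ∑ h ∈ Hset F, (b - h)⁻¹ = 1 := by
  have hprod : ∏ h ∈ Hset F, (b - h) = 1 := by
    have := congrArg (eval b) (Epoly_eq_prod hn hq)
    rw [Epoly_eval, eval_prod] at this
    simp_rw [eval_sub, eval_X, eval_C] at this
    rw [← this, hb]
  have hne : ∀ h ∈ Hset F, b - h ≠ 0 := by
    intro h hh h0
    have : (∏ h ∈ Hset F, (b - h)) = 0 := Finset.prod_eq_zero hh h0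
    rw [hprod] at this
    exact one_ne_zero this
  -- each inverse equals the product over the erase
  have hinv : ∀ h ∈ Hset F, (b - h)⁻¹ = ∏ h' ∈ (Hset F).erase h, (b - h') := by
    intro h hh
    have := Finset.mul_prod_erase (Hset F) (fun h' => b - h') hh
    field_simp [hne h hh]
    rw [mul_comm] at this
    rw [mul_comm (b - h), this, hprod]
  rw [Finset.sum_congr rfl hinv]
  -- this sum is eval b (derivative E) = 1
  have hder : derivative (∏ h ∈ Hset F, (X - C h)) = (1 : F[X]) := by
    rw [← Epoly_eq_prod hn hq, Epoly_derivative hn]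
  -- expand derivative of the product
  have hder2 : derivative (∏ h ∈ Hset F, (X - C h)) =
      ∑ h ∈ Hset F, ∏ h' ∈ (Hset F).erase h, (X - C h') := by
    rw [Finset.prod_eq_multiset_prod, Polynomial.derivative_prod,
      Finset.sum_eq_multiset_sum]
    congr 1
    refine Multiset.map_congr rfl fun i _ => ?_
    rw [derivative_sub, derivative_X, derivative_C, sub_zero, mul_one,
      Finset.prod_eq_multiset_prod, Finset.erase_val]
  have := congrArg (eval b) (hder2 ▸ hder : (∑ h ∈ Hset F, ∏ h' ∈ (Hset F).erase h, (X - C h')) = 1)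
  rw [eval_finset_sum] at this
  simp_rw [eval_prod, eval_sub, eval_X, eval_C] at this
  rw [this, eval_one]

omit [Fintype F] [CharP F 2] in
lemma natDegree_f (a₁ a₂ : F) : (X ^ 3 + C a₂ * X ^ 2 + C a₁ * X : F[X]).natDegree = 3 := by
  compute_degree!

omit [Fintype F] [CharP F 2] in
lemma natDegree_g (b₀ : F) : (X ^ 2 + X + C b₀ : F[X]).natDegree = 2 := by
  compute_degree!

omit [Fintype F] [CharP F 2] in
lemma ratEval_some {f g : F[X]} {a : F} (h : g.eval a ≠ 0) :
    ratEval f g (some a) = some (f.eval a / g.eval a) := by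
  simp [ratEval, h]

omit [Fintype F] [CharP F 2] in
lemma ratEval_some_zero {f g : F[X]} {a : F} (h : g.eval a = 0) :
    ratEval f g (some a) = none := by
  simp [ratEval, h]

omit [Fintype F] [CharP F 2] in
lemma ratEval_none (a₁ a₂ b₀ : F) :
    ratEval (X ^ 3 + C a₂ * X ^ 2 + C a₁ * X : F[X]) (X ^ 2 + X + C b₀) none = none := by
  show (if (X ^ 2 + X + C b₀ : F[X]).natDegree < (X ^ 3 + C a₂ * X ^ 2 + C a₁ * X : F[X]).natDegree
    then none else _) = none
  rw [natDegree_f, natDegree_g]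
  norm_num

/-- if tr b₀ = 1 then the denominator never vanishes -/
lemma g_ne_zero (hq : Fintype.card F = 2 ^ n) {b₀ : F} (htr : tr n b₀ = 1) (x : F) :
    x ^ 2 + x + b₀ ≠ 0 := by
  intro h
  have hb : b₀ = x ^ 2 + x := by linear_combination -h + b₀ * (h2 (F := F))
  rw [hb, tr_AS hq] at htr
  exact one_ne_zero htr.symm

lemma backward (hq : Fintype.card F = 2 ^ n) (a₁ a₂ b₀ : F)
    (htr : tr n b₀ = 1) (ha1 : a₁ = b₀ + b₀⁻¹) (ha2 : a₂ = 1 + b₀⁻¹) :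
    Function.Bijective
      (ratEval (X ^ 3 + C a₂ * X ^ 2 + C a₁ * X : F[X]) (X ^ 2 + X + C b₀)) := by
  have hc : (2 : F) = 0 := h2
  have hb0 : b₀ ≠ 0 := by
    rintro rfl
    rw [tr_zero'] at htr
    exact one_ne_zero htr.symm
  have hbinv : b₀ * b₀⁻¹ = 1 := mul_inv_cancel₀ hb0
  have hgne : ∀ x : F, x ^ 2 + x + b₀ ≠ 0 := g_ne_zero hq htr
  have key : ∀ t : F, t ^ 3 + a₂ * t ^ 2 + a₁ * t = (t + b₀⁻¹) * (t ^ 2 + t + b₀) + 1 := by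
    intro t
    linear_combination t ^ 2 * ha2 + t * ha1 - hbinv - hc
  set φ : F → F := fun x => (x ^ 3 + a₂ * x ^ 2 + a₁ * x) / (x ^ 2 + x + b₀) with hφ
  -- injectivity
  have hinj : Function.Injective φ := by
    intro x y hxy
    by_contra hne
    rw [hφ] at hxy
    simp only at hxy
    have hEq : (x ^ 3 + a₂ * x ^ 2 + a₁ * x) * (y ^ 2 + y + b₀) =
        (y ^ 3 + a₂ * y ^ 2 + a₁ * y) * (x ^ 2 + x + b₀) :=
      (div_eq_div_iff (hgne x) (hgne y)).mp hxy
    have hxysub : x - y ≠ 0 := sub_ne_zero.mpr hne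
    have hs : x + y ≠ 0 := fun h => hne (by linear_combination h - y * hc)
    set u := x ^ 2 + x + b₀ with hu
    set v := y ^ 2 + y + b₀ with hv
    set s := x + y with hsd
    have e0 : (u * v) * (x - y) = (s + 1) * (x - y) := by
      rw [hu, hv, hsd]
      linear_combination (y ^ 2 + y + b₀) * key x - (x ^ 2 + x + b₀) * key y - hEq +
        (-(x) + x*b₀*y^2 + x*b₀^2 - x*y^2 - x*y^3 - x^2 + x^2*b₀ - x^2*b₀*y + x^2*y - x^2*y^3 + x^3*b₀ + x^3*y + x^3*y^2 - b₀*y^2 - b₀*y^3 - b₀^2*y + y + y^2) * hc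
    have e1 : u * v = s + 1 := mul_right_cancel₀ hxysub e0
    have e2 : u + v = s ^ 2 + s := by
      rw [hu, hv, hsd]
      linear_combination (b₀ - x * y) * hc
    have hqu : u ^ 2 + (s ^ 2 + s) * u + (s + 1) = 0 := by
      linear_combination u * e2 + e1 + (u * (s ^ 2 + s) + s + 1 - u * v) * hc
    -- the Artin-Schreier witness
    have hs1 : s + 1 ≠ 0 := by
      intro h0
      have : u * v = 0 := by rw [e1, h0]
      rcases mul_eq_zero.mp this with h' | h'
      · exact hgne x (hu ▸ h')
      · exact hgne y (hv ▸ h')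
    set w : F := (u + s + 1) / s with hw
    have hwu : w ^ 2 + w = u := by
      have hst : s * s⁻¹ = 1 := mul_inv_cancel₀ hs
      rw [hw, div_eq_mul_inv]
      linear_combination (s⁻¹ ^ 2 * (s * u + u - s ^ 2 * u + s ^ 2 + s)) * hc +
        (s⁻¹ ^ 2) * hqu + (u * (s * s⁻¹ + 1) - (u + s + 1) * s⁻¹) * hst
    -- trace contradiction
    have ht0 : tr n u = 0 := by rw [← hwu]; exact tr_AS hq w
    have ht1 : tr n u = 1 := by rw [hu]; rw [tr_sq_add_add hq]; exact htr
    rw [ht0] at ht1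
    exact one_ne_zero ht1.symm
  have hbijφ : Function.Bijective φ := Finite.injective_iff_bijective.mp hinj
  -- transfer to ratEval
  have hre : ratEval (X ^ 3 + C a₂ * X ^ 2 + C a₁ * X : F[X]) (X ^ 2 + X + C b₀) =
      Option.map φ := by
    funext o
    cases o with
    | none => rw [ratEval_none]; rfl
    | some a =>
      rw [ratEval_some (by simpa using hgne a)]
      simp [hφ]
  rw [hre]
  constructor
  · exact Option.map_injective hbijφ.1
  · rintro (_ | b)
    · exact ⟨none, rfl⟩
    · obtain ⟨a, rfl⟩ := hbijφ.2 b
      exact ⟨some a, rfl⟩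


section sums
variable (hn : 0 < n) (hq : Fintype.card F = 2 ^ n) {b₀ : F} (htr : tr n b₀ = 1)

omit [Fintype F] in
lemma hG1 (b₀ x : F) : (x + 1) ^ 2 + (x + 1) + b₀ = x ^ 2 + x + b₀ := by
  linear_combination (x + 1) * (h2 (F := F))

omit [Fintype F] in
lemma hbx (b₀ x : F) : b₀ - (x ^ 2 + x) = x ^ 2 + x + b₀ := by
  linear_combination -(x ^ 2 + x) * (h2 (F := F))

include hn hq htr in
lemma sum_x_div : ∑ x : F, x * (x ^ 2 + x + b₀)⁻¹ = 1 := by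
  rw [sum_pairing (fun x : F => x * (x ^ 2 + x + b₀)⁻¹) (fun h : F => (b₀ - h)⁻¹)]
  · exact sum_inv_eq_one hn hq htr
  · intro x
    rw [hG1, hbx]
    linear_combination (x * (x ^ 2 + x + b₀)⁻¹) * (h2 (F := F))

include hq in
lemma sum_inv_g : ∑ x : F, (x ^ 2 + x + b₀)⁻¹ = 0 := by
  refine sum_cancel _ fun x => ?_
  rw [hG1]

include hn hq htr in
lemma sum_sq_div (d : F) : ∑ x : F, (x + d) ^ 2 * (x ^ 2 + x + b₀)⁻¹ = 1 := by
  rw [sum_pairing (fun x : F => (x + d) ^ 2 * (x ^ 2 + x + b₀)⁻¹) (fun h : F => (b₀ - h)⁻¹)]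
  · exact sum_inv_eq_one hn hq htr
  · intro x
    rw [hG1, hbx]
    linear_combination (((x + d) ^ 2 + x + d) * (x ^ 2 + x + b₀)⁻¹) * (h2 (F := F))

include hn hq htr in
lemma sum_lin_div_sq (d : F) : ∑ x : F, (x + d) * ((x ^ 2 + x + b₀)⁻¹) ^ 2 = 1 := by
  rw [sum_pairing (fun x : F => (x + d) * ((x ^ 2 + x + b₀)⁻¹) ^ 2)
      (fun h : F => ((b₀ - h)⁻¹) ^ 2)]
  · rw [← sum_pow_char]
    rw [sum_inv_eq_one hn hq htr, one_pow]
  · intro x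
    rw [hG1, hbx]
    linear_combination ((x + d) * ((x ^ 2 + x + b₀)⁻¹) ^ 2) * (h2 (F := F))

include hq in
lemma sum_inv_g3 : ∑ x : F, ((x ^ 2 + x + b₀)⁻¹) ^ 3 = 0 := by
  refine sum_cancel _ fun x => ?_
  rw [hG1]

end sums

lemma forward (hn : 0 < n) (hq : Fintype.card F = 2 ^ n) (a₁ a₂ b₀ : F)
    (hco : IsCoprime (X ^ 3 + C a₂ * X ^ 2 + C a₁ * X : F[X]) (X ^ 2 + X + C b₀))
    (hbij : Function.Bijective
      (ratEval (X ^ 3 + C a₂ * X ^ 2 + C a₁ * X : F[X]) (X ^ 2 + X + C b₀))) :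
    tr n b₀ = 1 ∧ a₁ = b₀ + b₀⁻¹ ∧ a₂ = 1 + b₀⁻¹ := by
  have hc : (2 : F) = 0 := h2
  -- Step 1 : the trace of b₀ is 1
  have htr : tr n b₀ = 1 := by
    rcases tr_zero_or_one hq b₀ with h0 | h1
    · exfalso
      obtain ⟨x₀, hx₀⟩ := (tr_eq_zero_iff hn hq b₀).mp h0
      have hg0 : (X ^ 2 + X + C b₀ : F[X]).eval x₀ = 0 := by
        simp only [eval_add, eval_pow, eval_X, eval_C]
        linear_combination hx₀ + b₀ * hc
      have he1 := ratEval_some_zero (f := (X ^ 3 + C a₂ * X ^ 2 + C a₁ * X : F[X])) hg0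
      have he2 := ratEval_none (F := F) a₁ a₂ b₀
      have := hbij.1 (he1.trans he2.symm)
      simp at this
    · exact h1
  refine ⟨htr, ?_⟩
  have hb0 : b₀ ≠ 0 := by
    intro h
    rw [h, tr_zero'] at htr
    exact one_ne_zero htr.symm
  have hgne : ∀ x : F, x ^ 2 + x + b₀ ≠ 0 := g_ne_zero hq htr
  have hgev' : ∀ x : F, (X ^ 2 + X + C b₀ : F[X]).eval x ≠ 0 := fun x => by
    simpa using hgne x
  set φ : F → F := fun x => (x ^ 3 + a₂ * x ^ 2 + a₁ * x) / (x ^ 2 + x + b₀) with hφ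
  have hratsome : ∀ x : F,
      ratEval (X ^ 3 + C a₂ * X ^ 2 + C a₁ * X : F[X]) (X ^ 2 + X + C b₀) (some x)
        = some (φ x) := by
    intro x
    rw [ratEval_some (hgev' x)]
    simp [hφ]
  have hinjφ : Function.Injective φ := by
    intro x y h
    have heq : ratEval (X ^ 3 + C a₂ * X ^ 2 + C a₁ * X : F[X]) (X ^ 2 + X + C b₀) (some x)
        = ratEval (X ^ 3 + C a₂ * X ^ 2 + C a₁ * X : F[X]) (X ^ 2 + X + C b₀) (some y) := by
      rw [hratsome x, hratsome y, h]
    have := hbij.1 heq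
    simpa using this
  have hbijφ : Function.Bijective φ := Finite.injective_iff_bijective.mp hinjφ
  -- pointwise decomposition of φ
  have hptw : ∀ x : F, φ x = (x + (a₂ - 1)) +
      ((a₁ - b₀ - a₂ + 1) * (x * (x ^ 2 + x + b₀)⁻¹) +
        ((1 - a₂) * b₀) * (x ^ 2 + x + b₀)⁻¹) := by
    intro x
    rw [hφ]
    simp only
    rw [div_eq_mul_inv]
    have hginv : (x ^ 2 + x + b₀) * (x ^ 2 + x + b₀)⁻¹ = 1 := mul_inv_cancel₀ (hgne x)
    linear_combination (x + a₂ - 1) * hginv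
  -- the constant sums to zero
  have hconst : ∑ _x : F, (a₂ - 1) = 0 := by
    rw [Finset.sum_const, Finset.card_univ, hq, nsmul_eq_mul]
    have : ((2 ^ n : ℕ) : F) = 0 := by
      push_cast
      rw [hc, zero_pow hn.ne']
    rw [this, zero_mul]
  -- first power sum
  have hS1 : ∑ x : F, φ x = ∑ x : F, x :=
    Fintype.sum_bijective φ hbijφ _ _ fun x => rfl
  have hα : a₁ - b₀ - a₂ + 1 = 0 := by
    have expand : ∑ x : F, φ x = (∑ x : F, x) +
        ((a₁ - b₀ - a₂ + 1) * (∑ x : F, x * (x ^ 2 + x + b₀)⁻¹) +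
          ((1 - a₂) * b₀) * (∑ x : F, (x ^ 2 + x + b₀)⁻¹)) := by
      rw [Finset.sum_congr rfl fun x _ => hptw x, Finset.sum_add_distrib,
        Finset.sum_add_distrib, Finset.sum_add_distrib, hconst, add_zero,
        ← Finset.mul_sum, ← Finset.mul_sum]
    rw [hS1, sum_x_div hn hq htr, sum_inv_g hq, mul_zero, add_zero, mul_one] at expand
    linear_combination -expand
  -- simplified pointwise form
  have hptw2 : ∀ x : F, φ x = (x + (a₂ - 1)) + ((1 - a₂) * b₀) * (x ^ 2 + x + b₀)⁻¹ := by
    intro x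
    rw [hptw x, hα]
    ring
  -- cube identity
  have hcube : ∀ x : F, (φ x) ^ 3 = (x + (a₂ - 1)) ^ 3 +
      (((1 - a₂) * b₀) * ((x + (a₂ - 1)) ^ 2 * (x ^ 2 + x + b₀)⁻¹) +
        (((1 - a₂) * b₀) ^ 2 * ((x + (a₂ - 1)) * ((x ^ 2 + x + b₀)⁻¹) ^ 2) +
          ((1 - a₂) * b₀) ^ 3 * ((x ^ 2 + x + b₀)⁻¹) ^ 3)) := by
    intro x
    rw [hptw2 x]
    linear_combination ((x + (a₂ - 1)) ^ 2 * ((1 - a₂) * b₀) * (x ^ 2 + x + b₀)⁻¹ +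
      (x + (a₂ - 1)) * ((1 - a₂) * b₀) ^ 2 * ((x ^ 2 + x + b₀)⁻¹) ^ 2) * hc
  -- third power sums
  have hS3 : ∑ x : F, (φ x) ^ 3 = ∑ x : F, x ^ 3 :=
    Fintype.sum_bijective φ hbijφ _ _ fun x => rfl
  have hshift : ∑ x : F, (x + (a₂ - 1)) ^ 3 = ∑ x : F, x ^ 3 :=
    Fintype.sum_bijective (fun x : F => x + (a₂ - 1)) (Equiv.addRight (a₂ - 1)).bijective
      _ _ fun x => rfl
  have hβ : (1 - a₂) * b₀ + ((1 - a₂) * b₀) ^ 2 = 0 := by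
    have expand : ∑ x : F, (φ x) ^ 3 = (∑ x : F, (x + (a₂ - 1)) ^ 3) +
        (((1 - a₂) * b₀) * (∑ x : F, (x + (a₂ - 1)) ^ 2 * (x ^ 2 + x + b₀)⁻¹) +
          (((1 - a₂) * b₀) ^ 2 * (∑ x : F, (x + (a₂ - 1)) * ((x ^ 2 + x + b₀)⁻¹) ^ 2) +
            ((1 - a₂) * b₀) ^ 3 * (∑ x : F, ((x ^ 2 + x + b₀)⁻¹) ^ 3))) := by
      rw [Finset.sum_congr rfl fun x _ => hcube x, Finset.sum_add_distrib,
        Finset.sum_add_distrib, Finset.sum_add_distrib,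
        ← Finset.mul_sum, ← Finset.mul_sum, ← Finset.mul_sum]
    rw [hS3, hshift, sum_sq_div hn hq htr, sum_lin_div_sq hn hq htr,
      sum_inv_g3 hq, mul_zero, add_zero, mul_one, mul_one] at expand
    linear_combination -expand
  -- case analysis on β
  have hfac : ((1 - a₂) * b₀) * (1 + (1 - a₂) * b₀) = 0 := by linear_combination hβ
  rcases mul_eq_zero.mp hfac with hz | ho
  · -- β = 0 : contradiction with coprimality
    exfalso
    have ha2 : a₂ = 1 := by
      rcases mul_eq_zero.mp hz with h' | h'
      · linear_combination -h'
      · exact absurd h' hb0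
    have ha1 : a₁ = b₀ := by
      rw [ha2] at hα
      linear_combination hα
    have hfg : (X ^ 3 + C a₂ * X ^ 2 + C a₁ * X : F[X]) = X * (X ^ 2 + X + C b₀) := by
      rw [ha2, ha1, map_one]
      ring
    have hdvd : (X ^ 2 + X + C b₀ : F[X]) ∣ (X ^ 3 + C a₂ * X ^ 2 + C a₁ * X : F[X]) :=
      ⟨X, by rw [hfg]; ring⟩
    have hunit : IsUnit (X ^ 2 + X + C b₀ : F[X]) := hco.isUnit_of_dvd' hdvd (dvd_refl _)
    have := natDegree_eq_zero_of_isUnit hunit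
    rw [natDegree_g] at this
    omega
  · -- β = 1
    have hβ1 : (1 - a₂) * b₀ = 1 := by linear_combination -ho + ((1 - a₂) * b₀) * hc
    have ha2 : a₂ = 1 + b₀⁻¹ := by
      have : (1 - a₂) = b₀⁻¹ := by
        rw [mul_comm] at hβ1
        exact eq_inv_of_mul_eq_one_right hβ1
      linear_combination -this - b₀⁻¹ * hc
    have ha1 : a₁ = b₀ + b₀⁻¹ := by
      rw [ha2] at hα
      linear_combination hα
    exact ⟨ha1, ha2⟩


end
end S13

theorem stmt_13 (F : Type) [Field F] [Fintype F] (n : ℕ) (hn : 0 < n)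
    (hq : Fintype.card F = 2 ^ n) (a₁ a₂ b₀ : F)
    (hco : IsCoprime (X ^ 3 + C a₂ * X ^ 2 + C a₁ * X : F[X]) (X ^ 2 + X + C b₀)) :
    Function.Bijective
        (ratEval (X ^ 3 + C a₂ * X ^ 2 + C a₁ * X : F[X]) (X ^ 2 + X + C b₀)) ↔
      trOne n b₀ ∧ a₁ = b₀ + b₀⁻¹ ∧ a₂ = 1 + b₀⁻¹ := by
  haveI : CharP F 2 := S13.char_two hq
  have htr_iff : trOne n b₀ ↔ S13.tr n b₀ = 1 := Iff.rfl
  constructor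
  · intro h
    obtain ⟨h1, h2, h3⟩ := S13.forward hn hq a₁ a₂ b₀ hco h
    exact ⟨htr_iff.mpr h1, h2, h3⟩
  · rintro ⟨h1, h2, h3⟩
    exact S13.backward hq a₁ a₂ b₀ (htr_iff.mp h1) h2 h3

end
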